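/- For n > 2, the dimension of the linear span of the cone of systems with detailed balance with given positive equilibrium P* is n(n−1)/2, which is strictly less than (n−1)², the dimension of the affine solution set of the balance conditions; hence the inclusion Q^n_DB(P*) ⊊ Q^n_B(P*) is strict. -/

import Mathlib

open Finset

/-- Cone of rate matrices (zero diagonal) satisfying the balance condition
with equilibrium `P*`. -/
def coneB (n : ℕ) (pstar : Fin n → ℝ) : Set (Fin n → Fin n → ℝ) :=
  {q | (∀ i, q i i = 0) ∧ (∀ i j, i ≠ j → 0 ≤ q i j) ∧
    (∀ i, ∑ j ∈ Finset.univ.filter (· ≠ i), q i j * pstar j =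
      (∑ j ∈ Finset.univ.filter (· ≠ i), q j i) * pstar i)}

/-- Cone of rate matrices (zero diagonal) satisfying detailed balance
with equilibrium `P*`. -/
def coneDB (n : ℕ) (pstar : Fin n → ℝ) : Set (Fin n → Fin n → ℝ) :=
  {q | (∀ i, q i i = 0) ∧ (∀ i j, i ≠ j → 0 ≤ q i j) ∧
    (∀ i j, i ≠ j → q i j * pstar j = q j i * pstar i)}

section Aux

variable {n : ℕ} {pstar : Fin n → ℝ}

/-! ### Subspaces -/

def VDB (n : ℕ) (pstar : Fin n → ℝ) : Submodule ℝ (Fin n → Fin n → ℝ) where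
  carrier := {q | (∀ i, q i i = 0) ∧ ∀ i j, q i j * pstar j = q j i * pstar i}
  add_mem' := by
    rintro a b ⟨ha0, ha⟩ ⟨hb0, hb⟩
    exact ⟨fun i => by simp [ha0 i, hb0 i], fun i j => by
      simp only [Pi.add_apply, add_mul, ha i j, hb i j]⟩
  zero_mem' := by simp
  smul_mem' := by
    rintro c a ⟨ha0, ha⟩
    exact ⟨fun i => by simp [ha0 i], fun i j => by
      simp only [Pi.smul_apply, smul_eq_mul, mul_assoc, ha i j]⟩

def VB (n : ℕ) (pstar : Fin n → ℝ) : Submodule ℝ (Fin n → Fin n → ℝ) where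
  carrier := {q | (∀ i, q i i = 0) ∧ ∀ i, ∑ j ∈ Finset.univ.filter (· ≠ i), q i j * pstar j =
      (∑ j ∈ Finset.univ.filter (· ≠ i), q j i) * pstar i}
  add_mem' := by
    rintro a b ⟨ha0, ha⟩ ⟨hb0, hb⟩
    refine ⟨fun i => by simp [ha0 i, hb0 i], fun i => ?_⟩
    simp only [Pi.add_apply, add_mul, Finset.sum_add_distrib, ha i, hb i]
  zero_mem' := by simp
  smul_mem' := by
    rintro c a ⟨ha0, ha⟩
    refine ⟨fun i => by simp [ha0 i], fun i => ?_⟩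
    simp only [Pi.smul_apply, smul_eq_mul, mul_assoc, ← Finset.mul_sum, ha i]

/-! ### The reference element and the spans of the cones -/

noncomputable def qref (n : ℕ) (pstar : Fin n → ℝ) : Fin n → Fin n → ℝ :=
  fun i j => if i = j then 0 else 1 / pstar j

lemma qref_mem_coneDB (hpos : ∀ i, 0 < pstar i) : qref n pstar ∈ coneDB n pstar := by
  refine ⟨fun i => by simp [qref], fun i j hij => ?_, fun i j hij => ?_⟩
  · simp only [qref, if_neg hij]
    have := hpos j; positivity
  · simp only [qref, if_neg hij, if_neg (Ne.symm hij)]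
    rw [one_div, one_div, inv_mul_cancel₀ (hpos j).ne', inv_mul_cancel₀ (hpos i).ne']

lemma qref_mem_coneB (hpos : ∀ i, 0 < pstar i) : qref n pstar ∈ coneB n pstar := by
  refine ⟨fun i => by simp [qref], fun i j hij => ?_, fun i => ?_⟩
  · simp only [qref, if_neg hij]
    have := hpos j; positivity
  · have h1 : ∑ j ∈ Finset.univ.filter (· ≠ i), qref n pstar i j * pstar j
        = ∑ j ∈ Finset.univ.filter (· ≠ i), (1:ℝ) := by
      refine Finset.sum_congr rfl fun j hj => ?_
      rw [mem_filter] at hj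
      simp only [qref, if_neg (Ne.symm hj.2)]
      rw [one_div, inv_mul_cancel₀ (hpos j).ne']
    have h2 : (∑ j ∈ Finset.univ.filter (· ≠ i), qref n pstar j i) * pstar i
        = ∑ j ∈ Finset.univ.filter (· ≠ i), (1:ℝ) := by
      rw [Finset.sum_mul]
      refine Finset.sum_congr rfl fun j hj => ?_
      rw [mem_filter] at hj
      simp only [qref, if_neg hj.2]
      rw [one_div, inv_mul_cancel₀ (hpos i).ne']
    rw [h1, h2]

lemma mem_span_of_decomp (C : Set (Fin n → Fin n → ℝ)) (hpos : ∀ i, 0 < pstar i)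
    (q : Fin n → Fin n → ℝ)
    (href : qref n pstar ∈ C)
    (hmem : ∀ c : ℝ, (∀ i j, i ≠ j → 0 ≤ q i j + c * qref n pstar i j) →
      q + c • qref n pstar ∈ C) :
    q ∈ Submodule.span ℝ C := by
  set c : ℝ := ∑ p ∈ (univ : Finset (Fin n × Fin n)), |q p.1 p.2 * pstar p.2| with hc
  have hcb : ∀ i j : Fin n, -(q i j * pstar j) ≤ c := by
    intro i j
    calc -(q i j * pstar j) ≤ |q i j * pstar j| := neg_le_abs _
    _ ≤ c := by
        exact Finset.single_le_sum (f := fun p : Fin n × Fin n => |q p.1 p.2 * pstar p.2|)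
          (fun p _ => abs_nonneg _) (Finset.mem_univ (i, j))
  have hnn : ∀ i j, i ≠ j → 0 ≤ q i j + c * qref n pstar i j := by
    intro i j hij
    have hpj := hpos j
    have h1 : q i j + c * qref n pstar i j = (q i j * pstar j + c) / pstar j := by
      simp only [qref, if_neg hij]
      field_simp
    rw [h1]
    apply div_nonneg _ hpj.le
    have := hcb i j; linarith
  have h2 := hmem c hnn
  have h3 : q = (q + c • qref n pstar) - c • qref n pstar := by ring_nf
  rw [h3]
  exact sub_mem (Submodule.subset_span h2)
    (Submodule.smul_mem _ _ (Submodule.subset_span href))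

lemma span_coneDB (hpos : ∀ i, 0 < pstar i) :
    Submodule.span ℝ (coneDB n pstar) = VDB n pstar := by
  apply le_antisymm
  · rw [Submodule.span_le]
    rintro q ⟨hq0, _, hqdb⟩
    refine ⟨hq0, fun i j => ?_⟩
    by_cases hij : i = j
    · subst hij; rfl
    · exact hqdb i j hij
  · rintro q ⟨hq0, hqdb⟩
    refine mem_span_of_decomp _ hpos q (qref_mem_coneDB hpos) (fun c hnn => ?_)
    obtain ⟨hr0, hrnn, hrdb⟩ := qref_mem_coneDB (pstar := pstar) hpos
    refine ⟨fun i => by simp [hq0 i, hr0 i], hnn, fun i j hij => ?_⟩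
    simp only [Pi.add_apply, Pi.smul_apply, smul_eq_mul, add_mul, hqdb i j]
    rw [show c * qref n pstar i j * pstar j = c * (qref n pstar i j * pstar j) by ring,
      hrdb i j hij]
    ring

lemma span_coneB (hpos : ∀ i, 0 < pstar i) :
    Submodule.span ℝ (coneB n pstar) = VB n pstar := by
  apply le_antisymm
  · rw [Submodule.span_le]
    rintro q ⟨hq0, _, hqb⟩
    exact ⟨hq0, hqb⟩
  · rintro q ⟨hq0, hqb⟩
    refine mem_span_of_decomp _ hpos q (qref_mem_coneB hpos) (fun c hnn => ?_)
    obtain ⟨hr0, hrnn, hrb⟩ := qref_mem_coneB (pstar := pstar) hpos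
    refine ⟨fun i => by simp [hq0 i, hr0 i], hnn, fun i => ?_⟩
    have eL : ∑ j ∈ Finset.univ.filter (· ≠ i),
          (q i j + c * qref n pstar i j) * pstar j
        = (∑ j ∈ Finset.univ.filter (· ≠ i), q i j * pstar j)
          + c * ∑ j ∈ Finset.univ.filter (· ≠ i), qref n pstar i j * pstar j := by
      rw [Finset.mul_sum, ← Finset.sum_add_distrib]
      exact Finset.sum_congr rfl fun j _ => by ring
    have eR : (∑ j ∈ Finset.univ.filter (· ≠ i), (q j i + c * qref n pstar j i)) * pstar i
        = (∑ j ∈ Finset.univ.filter (· ≠ i), q j i) * pstar i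
          + c * ((∑ j ∈ Finset.univ.filter (· ≠ i), qref n pstar j i) * pstar i) := by
      rw [Finset.sum_add_distrib, ← Finset.mul_sum]
      ring
    simp only [Pi.add_apply, Pi.smul_apply, smul_eq_mul]
    rw [eL, eR, hqb i, hrb i]

/-! ### Dimension of `VDB` -/

abbrev PairLT (n : ℕ) := {p : Fin n × Fin n // p.1 < p.2}

def resLT (n : ℕ) : (Fin n → Fin n → ℝ) →ₗ[ℝ] (PairLT n → ℝ) where
  toFun q := fun p => q p.1.1 p.1.2
  map_add' _ _ := rfl
  map_smul' _ _ := rfl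

noncomputable def extLT (n : ℕ) (pstar : Fin n → ℝ) :
    (PairLT n → ℝ) →ₗ[ℝ] (Fin n → Fin n → ℝ) where
  toFun r := fun i j =>
    if h : i < j then r ⟨(i, j), h⟩
    else if h' : j < i then r ⟨(j, i), h'⟩ * (pstar i / pstar j) else 0
  map_add' a b := by
    funext i j
    dsimp only [Pi.add_apply]
    split_ifs <;> ring
  map_smul' c a := by
    funext i j
    dsimp only [Pi.smul_apply, smul_eq_mul, RingHom.id_apply]
    split_ifs <;> ring

lemma extLT_mem (hpos : ∀ i, 0 < pstar i) (r : PairLT n → ℝ) :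
    extLT n pstar r ∈ VDB n pstar := by
  constructor
  · intro i
    simp [extLT]
  · intro i j
    rcases lt_trichotomy i j with h | h | h
    · simp only [extLT, LinearMap.coe_mk, AddHom.coe_mk, dif_pos h, dif_neg (lt_asymm h),
        dif_neg (lt_irrefl _)]
      field_simp
      rw [mul_div_cancel_right₀ _ (hpos i).ne']
    · subst h; ring
    · simp only [extLT, LinearMap.coe_mk, AddHom.coe_mk, dif_pos h, dif_neg (lt_asymm h),
        dif_neg (lt_irrefl _)]
      field_simp
      rw [mul_div_cancel_right₀ _ (hpos j).ne']

noncomputable def equivDB (hpos : ∀ i, 0 < pstar i) : ↥(VDB n pstar) ≃ₗ[ℝ] (PairLT n → ℝ) :=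
  LinearEquiv.ofLinear ((resLT n).comp (VDB n pstar).subtype)
    ((extLT n pstar).codRestrict (VDB n pstar) (extLT_mem hpos))
    (by
      ext r p
      obtain ⟨⟨i, j⟩, h⟩ := p
      simp only [LinearMap.coe_comp, Function.comp_apply, LinearMap.codRestrict_apply,
        Submodule.coe_subtype, LinearMap.id_coe, id_eq, resLT, LinearMap.coe_mk, AddHom.coe_mk]
      simp [extLT, dif_pos h])
    (by
      apply LinearMap.ext
      rintro ⟨q, hq0, hqdb⟩
      apply Subtype.ext
      funext i j
      simp only [LinearMap.coe_comp, Function.comp_apply, LinearMap.codRestrict_apply,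
        Submodule.coe_subtype, LinearMap.id_coe, id_eq, resLT, LinearMap.coe_mk, AddHom.coe_mk]
      show extLT n pstar _ i j = q i j
      rcases lt_trichotomy i j with h | h | h
      · simp [extLT, resLT, dif_pos h]
      · subst h
        simp [extLT, hq0 i]
      · simp only [extLT, resLT, LinearMap.coe_mk, AddHom.coe_mk, dif_neg (lt_asymm h), dif_pos h]
        have hpj := (hpos j).ne'
        field_simp
        linarith [hqdb i j])

def pairLTEquiv (n : ℕ) : PairLT n ≃ Σ j : Fin n, Fin j.val where
  toFun p := ⟨p.1.2, ⟨p.1.1.val, p.2⟩⟩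
  invFun x := ⟨(⟨x.2.val, lt_trans x.2.isLt x.1.isLt⟩, x.1), x.2.isLt⟩
  left_inv p := by
    obtain ⟨⟨i, j⟩, h⟩ := p
    simp
  right_inv x := by
    obtain ⟨j, k⟩ := x
    simp

lemma card_pairLT (n : ℕ) : Fintype.card (PairLT n) = n * (n - 1) / 2 := by
  rw [Fintype.card_congr (pairLTEquiv n), Fintype.card_sigma]
  simp only [Fintype.card_fin]
  rw [Fin.sum_univ_eq_sum_range (fun i => i), Finset.sum_range_id]

lemma finrank_VDB (hpos : ∀ i, 0 < pstar i) :
    Module.finrank ℝ ↥(VDB n pstar) = n * (n - 1) / 2 := by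
  rw [(equivDB hpos).finrank_eq, Module.finrank_fintype_fun_eq_card, card_pairLT]

end Aux

/-! ### Dimension of `VB` (over `Fin (n+1)`) -/

section AuxB

variable {n : ℕ} {pstar : Fin (n + 1) → ℝ}

abbrev PairB (n : ℕ) := {p : Fin (n + 1) × Fin (n + 1) // p.1 ≠ p.2 ∧ p.2 ≠ 0}

def resB (n : ℕ) : (Fin (n + 1) → Fin (n + 1) → ℝ) →ₗ[ℝ] (PairB n → ℝ) where
  toFun q := fun p => q p.1.1 p.1.2
  map_add' _ _ := rfl
  map_smul' _ _ := rfl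

def ext0 (n : ℕ) : (PairB n → ℝ) →ₗ[ℝ] (Fin (n + 1) → Fin (n + 1) → ℝ) where
  toFun f := fun a b => if h : a ≠ b ∧ b ≠ 0 then f ⟨(a, b), h⟩ else 0
  map_add' a b := by
    funext i j
    dsimp only [Pi.add_apply]
    split_ifs <;> simp
  map_smul' c a := by
    funext i j
    dsimp only [Pi.smul_apply, smul_eq_mul, RingHom.id_apply]
    split_ifs <;> simp

lemma ext0_diag (f : PairB n → ℝ) (i : Fin (n + 1)) : ext0 n f i i = 0 := by
  simp [ext0]

lemma ext0_zero (f : PairB n → ℝ) (i : Fin (n + 1)) : ext0 n f i 0 = 0 := by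
  simp [ext0]

lemma ext0_apply (f : PairB n → ℝ) {i j : Fin (n + 1)} (h : i ≠ j ∧ j ≠ 0) :
    ext0 n f i j = f ⟨(i, j), h⟩ := dif_pos h

noncomputable def extB (n : ℕ) (pstar : Fin (n + 1) → ℝ) :
    (PairB n → ℝ) →ₗ[ℝ] (Fin (n + 1) → Fin (n + 1) → ℝ) where
  toFun f := fun i j =>
    if j = 0 then
      (if i = 0 then 0 else
        (pstar i * (∑ k ∈ Finset.univ.filter (· ≠ i), ext0 n f k i)
          - ∑ k ∈ Finset.univ.filter (· ≠ i), ext0 n f i k * pstar k) / pstar 0)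
    else ext0 n f i j
  map_add' a b := by
    funext i j
    dsimp only [Pi.add_apply]
    rw [map_add]
    by_cases hj : j = 0
    · rw [if_pos hj, if_pos hj, if_pos hj]
      by_cases hi : i = 0
      · rw [if_pos hi, if_pos hi, if_pos hi]; ring
      · rw [if_neg hi, if_neg hi, if_neg hi]
        simp only [Pi.add_apply, Finset.sum_add_distrib, add_mul]
        ring
    · rw [if_neg hj, if_neg hj, if_neg hj]; simp
  map_smul' c a := by
    funext i j
    dsimp only [Pi.smul_apply, smul_eq_mul, RingHom.id_apply]
    rw [map_smul]
    by_cases hj : j = 0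
    · rw [if_pos hj, if_pos hj]
      by_cases hi : i = 0
      · rw [if_pos hi, if_pos hi]; ring
      · rw [if_neg hi, if_neg hi]
        have hnum : pstar i * (∑ k ∈ Finset.univ.filter (· ≠ i), (c • ext0 n a) k i)
              - ∑ k ∈ Finset.univ.filter (· ≠ i), (c • ext0 n a) i k * pstar k
            = c * (pstar i * (∑ k ∈ Finset.univ.filter (· ≠ i), ext0 n a k i)
              - ∑ k ∈ Finset.univ.filter (· ≠ i), ext0 n a i k * pstar k) := by
          simp only [Pi.smul_apply, smul_eq_mul, mul_assoc]
          rw [← Finset.mul_sum, ← Finset.mul_sum]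
          ring
        rw [hnum, mul_div_assoc]
    · rw [if_neg hj, if_neg hj]; simp

lemma extB_col_ne_zero (f : PairB n → ℝ) {i j : Fin (n + 1)} (hj : j ≠ 0) :
    extB n pstar f i j = ext0 n f i j := by
  simp only [extB, LinearMap.coe_mk, AddHom.coe_mk, if_neg hj]

lemma extB_col_zero (hpos : ∀ i, 0 < pstar i) (f : PairB n → ℝ) {i : Fin (n + 1)} (hi : i ≠ 0) :
    extB n pstar f i 0 * pstar 0
      = pstar i * (∑ k ∈ univ, ext0 n f k i) - ∑ k ∈ univ, ext0 n f i k * pstar k := by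
  simp only [extB, LinearMap.coe_mk, AddHom.coe_mk, if_true]
  rw [if_neg hi, div_mul_cancel₀ _ (hpos 0).ne']
  congr 1
  · congr 1
    rw [Finset.filter_ne',
      Finset.sum_erase (f := fun k => ext0 n f k i) _ (ext0_diag f i)]
  · rw [Finset.filter_ne', Finset.sum_erase]
    rw [ext0_diag, zero_mul]

lemma extB_mem (hpos : ∀ i, 0 < pstar i) (f : PairB n → ℝ) :
    extB n pstar f ∈ VB (n + 1) pstar := by
  constructor
  · intro i
    by_cases hi : i = 0
    · subst hi; simp [extB]
    · exact (extB_col_ne_zero f hi).trans (ext0_diag f i)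
  · intro i
    by_cases hi : i = 0
    · subst hi
      have hLHS : ∑ j ∈ Finset.univ.filter (· ≠ (0 : Fin (n+1))), extB n pstar f 0 j * pstar j
          = ∑ j ∈ (univ : Finset (Fin (n+1))), ext0 n f 0 j * pstar j := by
        rw [Finset.filter_ne']
        have e1 : ∑ j ∈ (univ : Finset (Fin (n+1))).erase 0, extB n pstar f 0 j * pstar j
            = ∑ j ∈ (univ : Finset (Fin (n+1))).erase 0, ext0 n f 0 j * pstar j :=
          Finset.sum_congr rfl fun j hj => by
            rw [extB_col_ne_zero f (Finset.mem_erase.mp hj).1]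
        rw [e1]
        exact Finset.sum_erase (f := fun j => ext0 n f 0 j * pstar j) _
          (show ext0 n f 0 0 * pstar 0 = 0 by rw [ext0_diag, zero_mul])
      have hRHS : (∑ j ∈ Finset.univ.filter (· ≠ (0 : Fin (n+1))), extB n pstar f j 0) * pstar 0
          = ∑ j ∈ (univ : Finset (Fin (n+1))).erase 0,
              (pstar j * (∑ k ∈ univ, ext0 n f k j) - ∑ k ∈ univ, ext0 n f j k * pstar k) := by
        rw [Finset.filter_ne', Finset.sum_mul]
        refine Finset.sum_congr rfl fun j hj => ?_
        rw [Finset.mem_erase] at hj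
        exact extB_col_zero hpos f hj.1
      rw [hLHS, hRHS, Finset.sum_sub_distrib]
      have h1 : ∑ j ∈ (univ : Finset (Fin (n+1))).erase 0, pstar j * ∑ k ∈ univ, ext0 n f k j
          = ∑ j ∈ (univ : Finset (Fin (n+1))), ∑ k ∈ univ, pstar j * ext0 n f k j := by
        rw [Finset.sum_erase _ (by simp [ext0_zero])]
        exact Finset.sum_congr rfl fun j _ => Finset.mul_sum _ _ _
      have h2 : ∑ j ∈ (univ : Finset (Fin (n+1))).erase 0, ∑ k ∈ univ, ext0 n f j k * pstar k
          = (∑ j ∈ (univ : Finset (Fin (n+1))), ∑ k ∈ univ, ext0 n f j k * pstar k)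
            - ∑ k ∈ univ, ext0 n f 0 k * pstar k := by
        rw [Finset.sum_erase_eq_sub (Finset.mem_univ 0)]
      have h3 : ∑ j ∈ (univ : Finset (Fin (n+1))), ∑ k ∈ univ, pstar j * ext0 n f k j
          = ∑ j ∈ (univ : Finset (Fin (n+1))), ∑ k ∈ univ, ext0 n f j k * pstar k := by
        rw [Finset.sum_comm]
        exact Finset.sum_congr rfl fun a _ => Finset.sum_congr rfl fun b _ => mul_comm _ _
      rw [h1, h2, h3]
      ring
    · have h0mem : (0 : Fin (n+1)) ∈ (univ : Finset (Fin (n+1))).erase i :=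
        Finset.mem_erase.mpr ⟨Ne.symm hi, Finset.mem_univ _⟩
      have hLHS : ∑ j ∈ Finset.univ.filter (· ≠ i), extB n pstar f i j * pstar j
          = extB n pstar f i 0 * pstar 0
            + ∑ j ∈ ((univ : Finset (Fin (n+1))).erase i).erase 0, ext0 n f i j * pstar j := by
        rw [Finset.filter_ne', ← Finset.add_sum_erase _ _ h0mem]
        congr 1
        refine Finset.sum_congr rfl fun j hj => ?_
        rw [Finset.mem_erase] at hj
        rw [extB_col_ne_zero f hj.1]
      have h3 : ∑ j ∈ ((univ : Finset (Fin (n+1))).erase i).erase 0, ext0 n f i j * pstar j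
          = ∑ k ∈ univ, ext0 n f i k * pstar k := by
        rw [Finset.sum_erase _ (by rw [ext0_zero, zero_mul])]
        rw [Finset.sum_erase _ (by rw [ext0_diag, zero_mul])]
      have hRHS : (∑ j ∈ Finset.univ.filter (· ≠ i), extB n pstar f j i) * pstar i
          = (∑ k ∈ univ, ext0 n f k i) * pstar i := by
        congr 1
        rw [Finset.filter_ne']
        rw [Finset.sum_congr rfl (fun j hj => extB_col_ne_zero f hi)]
        exact Finset.sum_erase _ (ext0_diag f i)
      rw [hLHS, h3, hRHS, extB_col_zero hpos f hi]
      ring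

noncomputable def equivB (hpos : ∀ i, 0 < pstar i) : ↥(VB (n + 1) pstar) ≃ₗ[ℝ] (PairB n → ℝ) :=
  LinearEquiv.ofLinear ((resB n).comp (VB (n + 1) pstar).subtype)
    ((extB n pstar).codRestrict (VB (n + 1) pstar) (extB_mem hpos))
    (by
      apply LinearMap.ext
      intro f
      funext p
      obtain ⟨⟨i, j⟩, hij, hj0⟩ := p
      simp only [LinearMap.coe_comp, Function.comp_apply, LinearMap.codRestrict_apply,
        Submodule.coe_subtype, LinearMap.id_coe, id_eq, resB, LinearMap.coe_mk, AddHom.coe_mk]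
      rw [extB_col_ne_zero f hj0, ext0_apply f ⟨hij, hj0⟩])
    (by
      apply LinearMap.ext
      rintro ⟨q, hq0, hqb⟩
      apply Subtype.ext
      funext i j
      simp only [LinearMap.coe_comp, Function.comp_apply, LinearMap.codRestrict_apply,
        Submodule.coe_subtype, LinearMap.id_coe, id_eq]
      show extB n pstar (resB n q) i j = q i j
      have heq : ∀ a b : Fin (n+1), b ≠ 0 → ext0 n (resB n q) a b = q a b := by
        intro a b hb
        by_cases hab : a = b
        · subst hab
          rw [ext0_diag, hq0]
        · rw [ext0_apply _ ⟨hab, hb⟩]; rfl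
      by_cases hj : j = 0
      · subst hj
        by_cases hi : i = 0
        · subst hi
          simp only [extB, LinearMap.coe_mk, AddHom.coe_mk, if_true]
          exact (hq0 0).symm
        · have hkey := extB_col_zero (pstar := pstar) hpos (resB n q) hi
          have hin : ∑ k ∈ (univ : Finset (Fin (n+1))), ext0 n (resB n q) k i
              = ∑ k ∈ (univ : Finset (Fin (n+1))).erase i, q k i := by
            rw [← Finset.sum_erase (f := fun k => ext0 n (resB n q) k i) _
              (ext0_diag (resB n q) i)]
            exact Finset.sum_congr rfl fun k _ => heq k i hi
          have hout : ∑ k ∈ (univ : Finset (Fin (n+1))), ext0 n (resB n q) i k * pstar k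
              = (∑ k ∈ (univ : Finset (Fin (n+1))).erase i, q i k * pstar k) - q i 0 * pstar 0 := by
            have h0mem : (0 : Fin (n+1)) ∈ (univ : Finset (Fin (n+1))).erase i :=
              Finset.mem_erase.mpr ⟨Ne.symm hi, Finset.mem_univ _⟩
            rw [← Finset.sum_erase_eq_sub (f := fun k => q i k * pstar k) h0mem]
            rw [← Finset.sum_erase (f := fun k => ext0 n (resB n q) i k * pstar k)
              (a := i) _
              (show ext0 n (resB n q) i i * pstar i = 0 by rw [ext0_diag, zero_mul])]
            rw [← Finset.sum_erase (f := fun k => ext0 n (resB n q) i k * pstar k)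
              (a := 0) ((univ : Finset (Fin (n+1))).erase i)
              (show ext0 n (resB n q) i 0 * pstar 0 = 0 by rw [ext0_zero, zero_mul])]
            refine Finset.sum_congr rfl fun k hk => ?_
            rw [Finset.mem_erase] at hk
            rw [heq i k hk.1]
          have hbal := hqb i
          rw [Finset.filter_ne'] at hbal
          refine mul_right_cancel₀ (hpos 0).ne' ?_
          rw [hkey, hin, hout, hbal]
          ring
      · rw [extB_col_ne_zero _ hj]
        exact heq i j hj)

/-- Counting: `PairB n` has `n²` elements (where the ambient type is `Fin (n+1)`). -/
def pairBEquiv (n : ℕ) :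
    PairB n ≃ {p : Fin (n + 1) × Fin (n + 1) // p.1 ≠ 0 ∧ p.2 ≠ 0} where
  toFun p := ⟨((if p.1.1 = 0 then p.1.2 else p.1.1), p.1.2), by
    obtain ⟨⟨i, j⟩, hij, hj⟩ := p
    dsimp only
    split_ifs with h
    · exact ⟨hj, hj⟩
    · exact ⟨h, hj⟩⟩
  invFun p := ⟨((if p.1.1 = p.1.2 then 0 else p.1.1), p.1.2), by
    obtain ⟨⟨a, b⟩, ha, hb⟩ := p
    dsimp only
    split_ifs with h
    · exact ⟨Ne.symm hb, hb⟩
    · exact ⟨h, hb⟩⟩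
  left_inv p := by
    obtain ⟨⟨i, j⟩, hij, hj⟩ := p
    apply Subtype.ext
    dsimp only
    by_cases hi : i = 0
    · subst hi
      simp
    · simp [hi, show i ≠ j from hij]
  right_inv p := by
    obtain ⟨⟨a, b⟩, ha, hb⟩ := p
    apply Subtype.ext
    dsimp only
    by_cases hab : a = b
    · subst hab
      simp
    · simp [hab, show a ≠ 0 from ha]

lemma card_pairB (n : ℕ) : Fintype.card (PairB n) = ((n + 1) - 1) ^ 2 := by
  rw [Fintype.card_congr (pairBEquiv n),
    Fintype.card_congr (Equiv.subtypeProdEquivProd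
      (p := fun a : Fin (n+1) => a ≠ 0) (q := fun b : Fin (n+1) => b ≠ 0)),
    Fintype.card_prod]
  have : Fintype.card {a : Fin (n + 1) // a ≠ 0} = n := by
    simp [Fintype.card_subtype_compl]
  rw [this]
  have h9 : n + 1 - 1 = n := by omega
  rw [h9, pow_two]

lemma finrank_VB (hpos : ∀ i, 0 < pstar i) :
    Module.finrank ℝ ↥(VB (n + 1) pstar) = ((n + 1) - 1) ^ 2 := by
  rw [(equivB hpos).finrank_eq, Module.finrank_fintype_fun_eq_card, card_pairB]

end AuxB

/-- For `n > 2`, the cone of detailed balance systems spans a space of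
dimension `n(n−1)/2`, strictly less than `(n−1)²`, the dimension of the span
of the cone of systems with the balance condition; hence the inclusion
`Q^n_DB(P*) ⊊ Q^n_B(P*)` is strict. -/
theorem coneDB_dim_lt_coneB_dim (n : ℕ) (hn : 2 < n) (pstar : Fin n → ℝ)
    (hpos : ∀ i, 0 < pstar i) :
    Module.finrank ℝ ↥(Submodule.span ℝ (coneDB n pstar)) = n * (n - 1) / 2 ∧
    Module.finrank ℝ ↥(Submodule.span ℝ (coneB n pstar)) = (n - 1) ^ 2 ∧
    n * (n - 1) / 2 < (n - 1) ^ 2 ∧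
    coneDB n pstar ⊂ coneB n pstar := by
  obtain ⟨m, rfl⟩ : ∃ m, n = m + 1 := ⟨n - 1, by omega⟩
  have hdb : Module.finrank ℝ ↥(Submodule.span ℝ (coneDB (m+1) pstar))
      = (m+1) * ((m+1) - 1) / 2 := by
    rw [span_coneDB hpos, finrank_VDB hpos]
  have hb : Module.finrank ℝ ↥(Submodule.span ℝ (coneB (m+1) pstar)) = ((m+1) - 1) ^ 2 := by
    rw [span_coneB hpos, finrank_VB hpos]
  have hlt : (m+1) * ((m+1) - 1) / 2 < ((m+1) - 1) ^ 2 := by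
    have h1 : (m+1) * ((m+1) - 1) = (m + 1) * m := rfl
    have h2 : ((m+1) - 1) ^ 2 = m * m := by
      simp [pow_two]
    rw [h1, h2]
    rw [Nat.div_lt_iff_lt_mul (by norm_num)]
    nlinarith [hn]
  refine ⟨hdb, hb, hlt, HasSubset.Subset.ssubset_of_ne ?_ ?_⟩
  · -- coneDB ⊆ coneB
    rintro q ⟨hq0, hqnn, hqdb⟩
    refine ⟨hq0, hqnn, fun i => ?_⟩
    rw [Finset.sum_mul]
    refine Finset.sum_congr rfl fun j hj => ?_
    rw [mem_filter] at hj
    exact hqdb i j (Ne.symm hj.2)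
  · -- the cones are not equal
    intro hEq
    rw [hEq, hb] at hdb
    exact absurd hdb (Nat.ne_of_lt hlt).symm
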